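/- Single-variable DRL is optimal: under the setup of the single-variable DRL, for every t ∈ ℝ, DRL(t) satisfies Π and there is no t' satisfying Π with |t - t'| < |t - DRL(t)|. -/

import Mathlib

open scoped Classical

namespace SingleVarDRL

/-- A finite set of constraints in a single real variable: constraint `i` (for `i : Fin n`)
is the disjunction of the `m i ≥ 1` inequalities `w i j * x + φ i j ≥ 0`, each with
`w i j ≠ 0`. -/
structure SVProblem where
  n : ℕ
  m : Fin n → ℕ
  hm : ∀ i, 1 ≤ m i
  w : ∀ i : Fin n, Fin (m i) → ℝ
  φ : ∀ i : Fin n, Fin (m i) → ℝ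
  hw : ∀ i j, w i j ≠ 0

/-- `t` satisfies all constraints in the set. -/
def SVProblem.Sat (P : SVProblem) (t : ℝ) : Prop :=
  ∀ i, ∃ j, P.w i j * t + P.φ i j ≥ 0

/-- Left boundary `l^Ψ` of constraint `i`: the max of `-φ/w` over negative-coefficient
disjuncts (`-∞` if there are none). -/
noncomputable def SVProblem.lB (P : SVProblem) (i : Fin P.n) : EReal :=
  ⨆ j : {j : Fin (P.m i) // P.w i j < 0}, ((-P.φ i j.1 / P.w i j.1 : ℝ) : EReal)

/-- Right boundary `r^Ψ` of constraint `i`: the min of `-φ/w` over positive-coefficient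
disjuncts (`+∞` if there are none). -/
noncomputable def SVProblem.rB (P : SVProblem) (i : Fin P.n) : EReal :=
  ⨅ j : {j : Fin (P.m i) // 0 < P.w i j}, ((-P.φ i j.1 / P.w i j.1 : ℝ) : EReal)

/-- Closest satisfying left boundary for `t`: the max over constraints `Ψ` of those left
boundaries `l^Ψ` that are (finite reals) smaller than `t` and satisfy the whole set. -/
noncomputable def SVProblem.L (P : SVProblem) (t : ℝ) : EReal :=
  sSup {v : EReal | ∃ i : Fin P.n, ∃ x : ℝ, (x : EReal) = P.lB i ∧ x < t ∧ P.Sat x ∧ v = (x : EReal)}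

/-- Closest satisfying right boundary for `t`. -/
noncomputable def SVProblem.R (P : SVProblem) (t : ℝ) : EReal :=
  sInf {v : EReal | ∃ i : Fin P.n, ∃ x : ℝ, (x : EReal) = P.rB i ∧ t < x ∧ P.Sat x ∧ v = (x : EReal)}

/-- The single-variable Disjunctive Refinement Layer: `t` itself if it satisfies the
constraints, otherwise whichever of the closest satisfying left/right boundaries is
nearer to `t` (the right boundary on ties). -/
noncomputable def SVProblem.DRL (P : SVProblem) (t : ℝ) : ℝ :=
  if P.Sat t then t
  else if (t : EReal) - P.L t < P.R t - (t : EReal) then (P.L t).toReal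
  else (P.R t).toReal

-- auxiliary lemmas
lemma satConstraint_iff (P : SVProblem) (i : Fin P.n) (x : ℝ) :
    (∃ j, P.w i j * x + P.φ i j ≥ 0) ↔ ((x:EReal) ≤ P.lB i ∨ P.rB i ≤ (x:EReal)) := by
  constructor
  · rintro ⟨j, hj⟩
    rcases (P.hw i j).lt_or_gt with hneg | hpos
    · left
      have hx : x ≤ -P.φ i j / P.w i j := by
        rw [le_div_iff_of_neg hneg]; nlinarith
      calc (x:EReal) ≤ ((-P.φ i j / P.w i j : ℝ) : EReal) := EReal.coe_le_coe_iff.2 hx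
        _ ≤ P.lB i := le_iSup (fun k : {j : Fin (P.m i) // P.w i j < 0} =>
              ((-P.φ i k.1 / P.w i k.1 : ℝ) : EReal)) ⟨j, hneg⟩
    · right
      have hx : -P.φ i j / P.w i j ≤ x := by
        rw [div_le_iff₀ hpos]; nlinarith
      calc P.rB i ≤ ((-P.φ i j / P.w i j : ℝ) : EReal) := iInf_le (fun k : {j : Fin (P.m i) // 0 < P.w i j} =>
              ((-P.φ i k.1 / P.w i k.1 : ℝ) : EReal)) ⟨j, hpos⟩
        _ ≤ (x:EReal) := EReal.coe_le_coe_iff.2 hx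
  · rintro (h | h)
    · by_cases hne : Nonempty {j : Fin (P.m i) // P.w i j < 0}
      · obtain ⟨j0, hj0⟩ := Finite.exists_max
          (fun k : {j : Fin (P.m i) // P.w i j < 0} => ((-P.φ i k.1 / P.w i k.1 : ℝ) : EReal))
        have hsup : P.lB i ≤ ((-P.φ i j0.1 / P.w i j0.1 : ℝ) : EReal) := iSup_le hj0
        have hx : x ≤ -P.φ i j0.1 / P.w i j0.1 := EReal.coe_le_coe_iff.1 (h.trans hsup)
        refine ⟨j0.1, ?_⟩
        have hwj := j0.2
        rw [le_div_iff_of_neg hwj] at hx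
        nlinarith
      · rw [not_nonempty_iff] at hne
        rw [SVProblem.lB, iSup_of_empty] at h
        exact absurd (le_bot_iff.1 h) (EReal.coe_ne_bot x)
    · by_cases hne : Nonempty {j : Fin (P.m i) // 0 < P.w i j}
      · obtain ⟨j0, hj0⟩ := Finite.exists_min
          (fun k : {j : Fin (P.m i) // 0 < P.w i j} => ((-P.φ i k.1 / P.w i k.1 : ℝ) : EReal))
        have hinf : ((-P.φ i j0.1 / P.w i j0.1 : ℝ) : EReal) ≤ P.rB i := le_iInf hj0
        have hx : -P.φ i j0.1 / P.w i j0.1 ≤ x := EReal.coe_le_coe_iff.1 (hinf.trans h)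
        refine ⟨j0.1, ?_⟩
        have hwj := j0.2
        rw [div_le_iff₀ hwj] at hx
        nlinarith
      · rw [not_nonempty_iff] at hne
        rw [SVProblem.rB, iInf_of_empty] at h
        exact absurd (top_le_iff.1 h) (EReal.coe_ne_top x)

lemma sat_iff (P : SVProblem) (x : ℝ) :
    P.Sat x ↔ ∀ i, ((x:EReal) ≤ P.lB i ∨ P.rB i ≤ (x:EReal)) := by
  unfold SVProblem.Sat
  exact forall_congr' fun i => satConstraint_iff P i x

lemma satClosed (P : SVProblem) : IsClosed {x : ℝ | P.Sat x} := by
  have h : {x : ℝ | P.Sat x} = ⋂ i, ⋃ j, {x | 0 ≤ P.w i j * x + P.φ i j} := by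
    ext x
    simp [SVProblem.Sat, ge_iff_le]
  rw [h]
  exact isClosed_iInter fun i => isClosed_iUnion_of_finite fun j =>
    isClosed_le continuous_const (by continuity)

lemma left_boundary (P : SVProblem) (t a : ℝ) (hat : a < t) (ha : P.Sat a)
    (hmax : ∀ x, a < x → x < t → ¬ P.Sat x) : ∃ i, (a : EReal) = P.lB i := by
  by_contra hcon
  push_neg at hcon
  have key : ∀ i, (a:EReal) < P.lB i ∨ P.rB i ≤ (a:EReal) := by
    intro i
    rcases (sat_iff P a).1 ha i with h | h
    · exact Or.inl (lt_of_le_of_ne h (hcon i))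
    · exact Or.inr h
  set b : EReal := ⨅ i : {i : Fin P.n // (a:EReal) < P.lB i}, P.lB i.1 with hb
  have hab : (a:EReal) < b := by
    by_cases hne : Nonempty {i : Fin P.n // (a:EReal) < P.lB i}
    · obtain ⟨i0, hi0⟩ := Finite.exists_min (fun i : {i : Fin P.n // (a:EReal) < P.lB i} => P.lB i.1)
      have : b = P.lB i0.1 := le_antisymm (iInf_le _ i0) (le_iInf hi0)
      rw [this]; exact i0.2
    · rw [not_nonempty_iff] at hne
      rw [hb, iInf_of_empty]
      exact EReal.coe_lt_top a
  have habt : (a:EReal) < min b ((t:ℝ):EReal) := lt_min hab (EReal.coe_lt_coe_iff.2 hat)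
  obtain ⟨x, hax, hxbt⟩ := EReal.exists_between_coe_real habt
  have hax' : a < x := EReal.coe_le_coe_iff.1 hax.le |>.lt_of_ne (by
    intro h; rw [h] at hax; exact lt_irrefl _ hax)
  have hxb : (x:EReal) < b := hxbt.trans_le (min_le_left _ _)
  have hxt : x < t := EReal.coe_lt_coe_iff.1 (hxbt.trans_le (min_le_right _ _))
  apply hmax x hax' hxt
  rw [sat_iff]
  intro i
  rcases key i with h | h
  · left
    exact le_of_lt (hxb.trans_le (iInf_le (fun i : {i : Fin P.n // (a:EReal) < P.lB i} => P.lB i.1) ⟨i, h⟩))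
  · right
    exact h.trans (EReal.coe_le_coe_iff.2 hax'.le)

lemma right_boundary (P : SVProblem) (t a : ℝ) (hat : t < a) (ha : P.Sat a)
    (hmin : ∀ x, t < x → x < a → ¬ P.Sat x) : ∃ i, (a : EReal) = P.rB i := by
  by_contra hcon
  push_neg at hcon
  have key : ∀ i, P.rB i < (a:EReal) ∨ (a:EReal) ≤ P.lB i := by
    intro i
    rcases (sat_iff P a).1 ha i with h | h
    · exact Or.inr h
    · exact Or.inl (lt_of_le_of_ne h (fun h' => hcon i h'.symm))
  set b : EReal := ⨆ i : {i : Fin P.n // P.rB i < (a:EReal)}, P.rB i.1 with hb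
  have hab : b < (a:EReal) := by
    by_cases hne : Nonempty {i : Fin P.n // P.rB i < (a:EReal)}
    · obtain ⟨i0, hi0⟩ := Finite.exists_max (fun i : {i : Fin P.n // P.rB i < (a:EReal)} => P.rB i.1)
      have : b = P.rB i0.1 := le_antisymm (iSup_le hi0) (le_iSup (fun i : {i : Fin P.n // P.rB i < (a:EReal)} => P.rB i.1) i0)
      rw [this]; exact i0.2
    · rw [not_nonempty_iff] at hne
      rw [hb, iSup_of_empty]
      exact bot_lt_iff_ne_bot.2 (EReal.coe_ne_bot a)
  have habt : max b ((t:ℝ):EReal) < (a:EReal) := max_lt hab (EReal.coe_lt_coe_iff.2 hat)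
  obtain ⟨x, hbtx, hxa⟩ := EReal.exists_between_coe_real habt
  have hxa' : x < a := EReal.coe_lt_coe_iff.1 hxa
  have hbx : b < (x:EReal) := (le_max_left _ _).trans_lt hbtx
  have htx : t < x := EReal.coe_lt_coe_iff.1 ((le_max_right _ _).trans_lt hbtx)
  apply hmin x htx hxa'
  rw [sat_iff]
  intro i
  rcases key i with h | h
  · right
    exact le_of_lt ((le_iSup (fun i : {i : Fin P.n // P.rB i < (a:EReal)} => P.rB i.1) ⟨i, h⟩).trans_lt hbx)
  · left
    exact (EReal.coe_le_coe_iff.2 hxa'.le).trans h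

lemma L_eq (P : SVProblem) (t a : ℝ) (hat : a < t) (ha : P.Sat a)
    (hmax : ∀ x, P.Sat x → x < t → x ≤ a) : P.L t = (a : EReal) := by
  have hmax' : ∀ x, a < x → x < t → ¬ P.Sat x := fun x h1 h2 hs =>
    absurd (hmax x hs h2) (not_le.2 h1)
  obtain ⟨i, hi⟩ := left_boundary P t a hat ha hmax'
  refine le_antisymm (sSup_le ?_) (le_sSup ⟨i, a, hi, hat, ha, rfl⟩)
  rintro v ⟨j, x, hx, hxt, hsx, rfl⟩
  exact EReal.coe_le_coe_iff.2 (hmax x hsx hxt)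

lemma R_eq (P : SVProblem) (t a : ℝ) (hat : t < a) (ha : P.Sat a)
    (hmin : ∀ x, P.Sat x → t < x → a ≤ x) : P.R t = (a : EReal) := by
  have hmin' : ∀ x, t < x → x < a → ¬ P.Sat x := fun x h1 h2 hs =>
    absurd (hmin x hs h1) (not_le.2 h2)
  obtain ⟨i, hi⟩ := right_boundary P t a hat ha hmin'
  refine le_antisymm (sInf_le ⟨i, a, hi, hat, ha, rfl⟩) (le_sInf ?_)
  rintro v ⟨j, x, hx, hxt, hsx, rfl⟩
  exact EReal.coe_le_coe_iff.2 (hmin x hsx hxt)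

lemma L_bot (P : SVProblem) (t : ℝ) (h : ∀ x, P.Sat x → ¬ x < t) : P.L t = ⊥ := by
  rw [SVProblem.L]
  refine (congrArg sSup (?_ : _ = (∅ : Set EReal))).trans sSup_empty
  ext v
  simp only [Set.mem_setOf_eq, Set.mem_empty_iff_false, iff_false]
  rintro ⟨i, x, _, hxt, hsx, _⟩
  exact h x hsx hxt

lemma R_top (P : SVProblem) (t : ℝ) (h : ∀ x, P.Sat x → ¬ t < x) : P.R t = ⊤ := by
  rw [SVProblem.R]
  refine (congrArg sInf (?_ : _ = (∅ : Set EReal))).trans sInf_empty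
  ext v
  simp only [Set.mem_setOf_eq, Set.mem_empty_iff_false, iff_false]
  rintro ⟨i, x, _, hxt, hsx, _⟩
  exact h x hsx hxt

end SingleVarDRL

open SingleVarDRL in
/-- Single-variable DRL is optimal (Lemma 1): `DRL t` satisfies `Π` and no value satisfying
`Π` is strictly closer to `t`. -/
theorem stmt_8 (P : SVProblem) (hsat : ∃ s, P.Sat s) (t : ℝ) :
    P.Sat (P.DRL t) ∧ ∀ t' : ℝ, P.Sat t' → ¬ |t - t'| < |t - P.DRL t| := by
  by_cases hst : P.Sat t
  · rw [SVProblem.DRL, if_pos hst]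
    refine ⟨hst, fun t' _ h => ?_⟩
    simp at h
    exact absurd h (not_lt.2 (abs_nonneg _))
  · rw [SVProblem.DRL, if_neg hst]
    by_cases hA : ∃ x, P.Sat x ∧ x < t
    · -- left part nonempty, get its max a
      have hAcl : IsClosed ({x : ℝ | P.Sat x} ∩ Set.Iic t) := (satClosed P).inter isClosed_Iic
      have hAne : ({x : ℝ | P.Sat x} ∩ Set.Iic t).Nonempty := by
        obtain ⟨x, hx1, hx2⟩ := hA; exact ⟨x, hx1, hx2.le⟩
      have hAbdd : BddAbove ({x : ℝ | P.Sat x} ∩ Set.Iic t) := ⟨t, fun x hx => hx.2⟩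
      set a := sSup ({x : ℝ | P.Sat x} ∩ Set.Iic t) with ha
      have haMem := hAcl.csSup_mem hAne hAbdd
      have hsa : P.Sat a := haMem.1
      have hat : a < t := lt_of_le_of_ne haMem.2 (fun h => hst (h ▸ hsa))
      have hamax : ∀ x, P.Sat x → x < t → x ≤ a := fun x hs hx =>
        le_csSup hAbdd ⟨hs, hx.le⟩
      have hL : P.L t = (a : EReal) := L_eq P t a hat hsa hamax
      by_cases hB : ∃ x, P.Sat x ∧ t < x
      · -- both sides
        have hBcl : IsClosed ({x : ℝ | P.Sat x} ∩ Set.Ici t) := (satClosed P).inter isClosed_Ici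
        have hBne : ({x : ℝ | P.Sat x} ∩ Set.Ici t).Nonempty := by
          obtain ⟨x, hx1, hx2⟩ := hB; exact ⟨x, hx1, hx2.le⟩
        have hBbdd : BddBelow ({x : ℝ | P.Sat x} ∩ Set.Ici t) := ⟨t, fun x hx => hx.2⟩
        set b := sInf ({x : ℝ | P.Sat x} ∩ Set.Ici t) with hbdef
        have hbMem := hBcl.csInf_mem hBne hBbdd
        have hsb : P.Sat b := hbMem.1
        have htb : t < b := lt_of_le_of_ne hbMem.2 (fun h => hst (h ▸ hsb))
        have hbmin : ∀ x, P.Sat x → t < x → b ≤ x := fun x hs hx =>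
          csInf_le hBbdd ⟨hs, hx.le⟩
        have hR : P.R t = (b : EReal) := R_eq P t b htb hsb hbmin
        rw [hL, hR, ← EReal.coe_sub, ← EReal.coe_sub]
        by_cases hc : ((t - a : ℝ) : EReal) < ((b - t : ℝ) : EReal)
        · rw [if_pos hc, EReal.toReal_coe]
          have hc' : t - a < b - t := EReal.coe_lt_coe_iff.1 hc
          refine ⟨hsa, fun t' hs' hlt => ?_⟩
          have hta : |t - a| = t - a := abs_of_pos (by linarith)
          rw [hta] at hlt
          rcases lt_or_ge t' t with h' | h'
          · have := hamax t' hs' h'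
            rw [abs_of_pos (by linarith)] at hlt; linarith
          · rcases eq_or_lt_of_le h' with rfl | h''
            · exact hst hs'
            · have := hbmin t' hs' h''
              rw [abs_of_neg (by linarith)] at hlt; linarith
        · rw [if_neg hc, EReal.toReal_coe]
          have hc' : b - t ≤ t - a := le_of_not_gt (fun h => hc (EReal.coe_lt_coe_iff.2 h))
          refine ⟨hsb, fun t' hs' hlt => ?_⟩
          have htb' : |t - b| = b - t := abs_of_neg (by linarith) |>.trans (by ring)
          rw [htb'] at hlt
          rcases lt_or_ge t' t with h' | h'
          · have := hamax t' hs' h'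
            rw [abs_of_pos (by linarith)] at hlt; linarith
          · rcases eq_or_lt_of_le h' with rfl | h''
            · exact hst hs'
            · have := hbmin t' hs' h''
              rw [abs_of_neg (by linarith)] at hlt; linarith
      · -- only left side
        push_neg at hB
        have hR : P.R t = ⊤ := R_top P t fun x hx hxt => absurd hxt (not_lt.2 (hB x hx))
        rw [hL, hR, ← EReal.coe_sub]
        have hcond : ((t - a : ℝ) : EReal) < ⊤ - (t : EReal) := by
          rw [EReal.top_sub_coe]
          exact EReal.coe_lt_top _
        rw [if_pos hcond, EReal.toReal_coe]
        refine ⟨hsa, fun t' hs' hlt => ?_⟩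
        have hta : |t - a| = t - a := abs_of_pos (by linarith)
        rw [hta] at hlt
        rcases lt_or_ge t' t with h' | h'
        · have := hamax t' hs' h'
          rw [abs_of_pos (by linarith)] at hlt; linarith
        · rcases eq_or_lt_of_le h' with rfl | h''
          · exact hst hs'
          · exact absurd h'' (not_lt.2 (hB t' hs'))
    · -- left side empty
      push_neg at hA
      have hL : P.L t = ⊥ := L_bot P t fun x hx hxt => absurd hxt (not_lt.2 (hA x hx))
      have hB : ∃ x, P.Sat x ∧ t < x := by
        obtain ⟨s, hs⟩ := hsat
        rcases lt_trichotomy s t with h | rfl | h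
        · exact absurd h (not_lt.2 (hA s hs))
        · exact absurd hs hst
        · exact ⟨s, hs, h⟩
      have hBcl : IsClosed ({x : ℝ | P.Sat x} ∩ Set.Ici t) := (satClosed P).inter isClosed_Ici
      have hBne : ({x : ℝ | P.Sat x} ∩ Set.Ici t).Nonempty := by
        obtain ⟨x, hx1, hx2⟩ := hB; exact ⟨x, hx1, hx2.le⟩
      have hBbdd : BddBelow ({x : ℝ | P.Sat x} ∩ Set.Ici t) := ⟨t, fun x hx => hx.2⟩
      set b := sInf ({x : ℝ | P.Sat x} ∩ Set.Ici t) with hbdef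
      have hbMem := hBcl.csInf_mem hBne hBbdd
      have hsb : P.Sat b := hbMem.1
      have htb : t < b := lt_of_le_of_ne hbMem.2 (fun h => hst (h ▸ hsb))
      have hbmin : ∀ x, P.Sat x → t < x → b ≤ x := fun x hs hx =>
        csInf_le hBbdd ⟨hs, hx.le⟩
      have hR : P.R t = (b : EReal) := R_eq P t b htb hsb hbmin
      rw [hL, hR]
      have hcond : ¬ ((t : EReal) - ⊥ < (b : EReal) - (t : EReal)) := by
        rw [EReal.sub_bot (EReal.coe_ne_bot t)]
        exact not_top_lt
      rw [if_neg hcond, EReal.toReal_coe]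
      refine ⟨hsb, fun t' hs' hlt => ?_⟩
      have htb' : |t - b| = b - t := abs_of_neg (by linarith) |>.trans (by ring)
      rw [htb'] at hlt
      rcases lt_or_ge t' t with h' | h'
      · exact absurd h' (not_lt.2 (hA t' hs'))
      · rcases eq_or_lt_of_le h' with rfl | h''
        · exact hst hs'
        · have := hbmin t' hs' h''
          rw [abs_of_neg (by linarith)] at hlt; linarith
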